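/- There exists a constant c ∈ ℕ such that for every n ∈ ℕ and every finite collection E of nonempty subsets of {1,…,n}, the hypergraph-state amplitude function Ψ : {0,1}^n → ℂ, Ψ(v) = ∏_{e∈E} (−1)^{∏_{i∈e} v_i}, is exactly representable by an RBM with at most ∑_{e∈E} (2·|e| + c) hidden neurons. In particular, restricted Boltzmann machines represent hypergraph states efficiently and exactly whenever |E| and the edge sizes are polynomial in n. -/

import Mathlib

open Complex

/-- A function `f : {0,1}^n → ℂ` is exactly representable by a restricted Boltzmann machine
with `m` hidden neurons if there are complex parameters `a i`, `b j`, `W i j` and a nonzero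
constant `C` with
`f v = C · exp(∑ i, a i v i) · ∏ j, (1 + exp(b j + ∑ i, W i j v i))` for all `v ∈ {0,1}^n`. -/
def RBMRepresentable (n m : ℕ) (f : (Fin n → Bool) → ℂ) : Prop :=
  ∃ (C : ℂ) (a : Fin n → ℂ) (b : Fin m → ℂ) (W : Fin n → Fin m → ℂ),
    C ≠ 0 ∧ ∀ v : Fin n → Bool,
      f v = C * Complex.exp (∑ i, a i * (if v i then 1 else 0)) *
        ∏ j, (1 + Complex.exp (b j + ∑ i, W i j * (if v i then 1 else 0)))

section HypergraphRBM
open Polynomial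

lemma keyA (k : ℕ) : ∃ C : ℂ, C ≠ 0 ∧ ∃ b : Fin (k + 1) → ℂ,
    ∀ s : ℕ, s ≤ k →
      C * ∏ j, (1 + Complex.exp (b j + (s : ℂ))) = (if s = k then -1 else 1) := by
  set x : ℕ → ℂ := fun s => Complex.exp (s : ℂ) with hx
  have hxne : ∀ s, x s ≠ 0 := fun s => Complex.exp_ne_zero _
  have hxinj : Function.Injective x := by
    intro s t hst
    have h1 : ((Real.exp s : ℝ) : ℂ) = ((Real.exp t : ℝ) : ℂ) := by
      simpa [x, Complex.ofReal_exp] using hst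
    exact Nat.cast_injective (Real.exp_injective (Complex.ofReal_injective h1))
  set g : ℕ → ℂ := fun s => if s = k then -1 else 1 with hg
  set Q : ℂ[X] := Lagrange.interpolate (Finset.range (k + 1)) x g with hQ
  set N : ℂ[X] := ∏ s ∈ Finset.range (k + 1), (X - Polynomial.C (x s)) with hN
  have hNeval : ∀ z, N.eval z = ∏ s ∈ Finset.range (k + 1), (z - x s) := by
    intro z; simp [hN, Polynomial.eval_prod]
  have hN0 : N.eval 0 ≠ 0 := by
    rw [hNeval]
    refine Finset.prod_ne_zero_iff.2 fun s _ => ?_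
    intro h
    exact hxne s (by linear_combination -h)
  obtain ⟨lam, hlam, hval⟩ : ∃ lam : ℂ, lam ≠ 0 ∧ Q.eval 0 + lam * N.eval 0 ≠ 0 := by
    by_cases h : Q.eval 0 + 1 * N.eval 0 = 0
    · refine ⟨2, two_ne_zero, fun h2 => hN0 ?_⟩
      linear_combination h2 - h
    · exact ⟨1, one_ne_zero, h⟩
  set P : ℂ[X] := Q + Polynomial.C lam * N with hP
  have hNne : N ≠ 0 := Finset.prod_ne_zero_iff.2 fun s _ => X_sub_C_ne_zero _
  have hNdeg : N.degree = ((k + 1 : ℕ) : WithBot ℕ) := by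
    rw [degree_eq_natDegree hNne, hN, natDegree_prod _ _ fun s _ => X_sub_C_ne_zero _]
    simp
  have hQdeg : Q.degree < ((k + 1 : ℕ) : WithBot ℕ) := by
    have := Lagrange.degree_interpolate_lt g
      (Set.injOn_of_injective hxinj (s := (Finset.range (k + 1) : Set ℕ)))
    rw [Finset.card_range] at this; exact this
  have hCN : (Polynomial.C lam * N).degree = ((k + 1 : ℕ) : WithBot ℕ) := by
    rw [degree_C_mul hlam, hNdeg]
  have hPdeg : P.degree = ((k + 1 : ℕ) : WithBot ℕ) := by
    rw [hP, degree_add_eq_right_of_degree_lt (by rw [hCN]; exact hQdeg), hCN]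
  have hPnat : P.natDegree = k + 1 := natDegree_eq_of_degree_eq_some hPdeg
  have hP0 : P.eval 0 ≠ 0 := by simpa [hP] using hval
  have hPne : P ≠ 0 := fun h => hP0 (by simp [h])
  have hsplits : P.Splits := IsAlgClosed.splits P
  have hroots : P.roots.card = k + 1 := by
    have := (hsplits.natDegree_eq_card_roots).symm
    simpa [hPnat] using this
  set l : List ℂ := P.roots.toList with hl
  have hlen : l.length = k + 1 := by rw [hl, Multiset.length_toList, hroots]
  set r : Fin (k + 1) → ℂ := fun j => l.get (Fin.cast hlen.symm j) with hr
  have hrroot : ∀ j, r j ∈ P.roots := by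
    intro j
    rw [← Multiset.mem_toList]
    exact List.get_mem l _
  have hr0 : ∀ j, r j ≠ 0 := by
    intro j h
    have := (Polynomial.mem_roots hPne).1 (hrroot j)
    rw [h] at this
    exact hP0 this
  -- factorization identity
  have hfact : ∀ z : ℂ, P.eval z = P.leadingCoeff * ∏ j, (z - r j) := by
    intro z
    conv_lhs => rw [hsplits.eq_prod_roots]
    rw [Polynomial.eval_mul, Polynomial.eval_C, Polynomial.eval_multiset_prod]
    congr 1
    rw [Multiset.map_map]
    have : P.roots = (l : Multiset ℂ) := (Multiset.coe_toList _).symm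
    rw [this]
    have h2 : (Multiset.map (Polynomial.eval z ∘ fun a => (X : ℂ[X]) - Polynomial.C a)
        (l : Multiset ℂ)).prod = (l.map fun a => z - a).prod := by
      simp [Function.comp]
    rw [h2, ← List.ofFn_getElem_eq_map l (fun a => z - a), List.prod_ofFn]
    exact (Fintype.prod_equiv (finCongr hlen.symm) _ _ fun j => rfl).symm
  refine ⟨P.eval 0, hP0, fun j => Complex.log (-(r j)⁻¹), fun s hs => ?_⟩
  have hbexp : ∀ j, Complex.exp (Complex.log (-(r j)⁻¹)) = -(r j)⁻¹ := by
    intro j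
    exact Complex.exp_log (by simpa using inv_ne_zero (hr0 j))
  have hC0 : P.eval 0 = P.leadingCoeff * ∏ j, (0 - r j) := hfact 0
  have key : P.eval (x s) = g s := by
    have hNs : N.eval (x s) = 0 := by
      rw [hNeval]
      exact Finset.prod_eq_zero (Finset.mem_range.2 (Nat.lt_succ_of_le hs)) (by ring)
    have hQs : Q.eval (x s) = g s :=
      Lagrange.eval_interpolate_at_node g
        (Set.injOn_of_injective hxinj (s := (Finset.range (k + 1) : Set ℕ)))
        (Finset.mem_range.2 (Nat.lt_succ_of_le hs))
    simp [hP, hNs, hQs]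
  calc P.eval 0 * ∏ j, (1 + Complex.exp (Complex.log (-(r j)⁻¹) + (s : ℂ)))
      = P.leadingCoeff * ∏ j, ((0 - r j) * (1 + (-(r j)⁻¹) * x s)) := by
        rw [hC0, mul_assoc, ← Finset.prod_mul_distrib]
        congr 1
        refine Finset.prod_congr rfl fun j _ => ?_
        rw [Complex.exp_add, hbexp j]
    _ = P.leadingCoeff * ∏ j, (x s - r j) := by
        congr 1
        refine Finset.prod_congr rfl fun j _ => ?_
        field_simp [hr0 j]
        ring
    _ = g s := by rw [← hfact, key]

lemma rbm_mul {n m₁ m₂ : ℕ} {f g : (Fin n → Bool) → ℂ}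
    (hf : RBMRepresentable n m₁ f) (hg : RBMRepresentable n m₂ g) :
    RBMRepresentable n (m₁ + m₂) (fun v => f v * g v) := by
  obtain ⟨C₁, a₁, b₁, W₁, hC₁, h₁⟩ := hf
  obtain ⟨C₂, a₂, b₂, W₂, hC₂, h₂⟩ := hg
  refine ⟨C₁ * C₂, a₁ + a₂, Fin.append b₁ b₂, fun i => Fin.append (W₁ i) (W₂ i),
    mul_ne_zero hC₁ hC₂, fun v => ?_⟩
  simp only [h₁ v, h₂ v, Pi.add_apply, add_mul, Finset.sum_add_distrib, Complex.exp_add,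
    Fin.prod_univ_add, Fin.append_left, Fin.append_right]
  ring

lemma single_edge (n : ℕ) (e : Finset (Fin n)) :
    RBMRepresentable n (e.card + 1)
      (fun v => (-1 : ℂ) ^ (∏ i ∈ e, (if v i then 1 else 0 : ℕ))) := by
  obtain ⟨C, hC, b, hb⟩ := keyA e.card
  refine ⟨C, 0, b, fun i j => if i ∈ e then 1 else 0, hC, fun v => ?_⟩
  set sN : ℕ := ∑ i ∈ e, (if v i then 1 else 0 : ℕ) with hsN
  have hsum : (∑ i, (if i ∈ e then (1 : ℂ) else 0) * (if v i then 1 else 0)) = (sN : ℂ) := by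
    rw [hsN]
    push_cast
    simp only [ite_mul, one_mul, zero_mul]
    rw [← Finset.sum_filter, Finset.filter_mem_eq_inter, Finset.univ_inter]
  have hle : sN ≤ e.card := by
    calc sN ≤ ∑ _i ∈ e, 1 := Finset.sum_le_sum fun i _ => by split <;> omega
    _ = e.card := by simp
  have hmain := hb sN hle
  simp only [hsum, Pi.zero_apply, zero_mul, Finset.sum_const_zero, Complex.exp_zero, mul_one]
  rw [hmain]
  by_cases hall : ∀ i ∈ e, v i
  · have h1 : (∏ i ∈ e, (if v i then 1 else 0 : ℕ)) = 1 :=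
      Finset.prod_eq_one fun i hi => by simp [hall i hi]
    have h2 : sN = e.card := by
      rw [hsN]
      calc (∑ i ∈ e, if v i then 1 else 0 : ℕ) = ∑ _i ∈ e, 1 :=
            Finset.sum_congr rfl fun i hi => by simp [hall i hi]
        _ = e.card := by simp
    simp [h1, h2]
  · push_neg at hall
    obtain ⟨i₀, hi₀, hvi₀⟩ := hall
    have h1 : (∏ i ∈ e, (if v i then 1 else 0 : ℕ)) = 0 :=
      Finset.prod_eq_zero hi₀ (by simp [hvi₀])
    have h2 : sN < e.card := by
      have : sN < ∑ _i ∈ e, 1 := by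
        refine Finset.sum_lt_sum (fun i _ => by split <;> omega) ⟨i₀, hi₀, by simp [hvi₀]⟩
      simpa using this
    simp [h1, Nat.ne_of_lt h2]

lemma repr_all (n : ℕ) (E : Finset (Finset (Fin n))) :
    RBMRepresentable n (∑ e ∈ E, (e.card + 1))
      (fun v => ∏ e ∈ E, (-1 : ℂ) ^ (∏ i ∈ e, (if v i then 1 else 0 : ℕ))) := by
  induction E using Finset.induction_on with
  | empty =>
      simp only [Finset.prod_empty, Finset.sum_empty]
      exact ⟨1, 0, fun j => j.elim0, fun i j => j.elim0, one_ne_zero, fun v => by simp⟩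
  | @insert a E ha ih =>
      rw [Finset.sum_insert ha]
      simp only [Finset.prod_insert ha]
      exact rbm_mul (single_edge n a) ih

end HypergraphRBM

/-- There is a constant `c` such that for every hypergraph `E` on vertices
`{1,…,n}` (a finite collection of nonempty subsets of `Fin n`), the hypergraph-state amplitude
`Ψ(v) = ∏_{e∈E} (−1)^{∏_{i∈e} v_i}` is exactly representable by an RBM with at most
`∑_{e∈E} (2|e| + c)` hidden neurons. -/
theorem hypergraph_state_representable :
    ∃ c : ℕ, ∀ (n : ℕ) (E : Finset (Finset (Fin n))), (∀ e ∈ E, e.Nonempty) →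
      ∃ m ≤ ∑ e ∈ E, (2 * e.card + c),
        RBMRepresentable n m
          (fun v => ∏ e ∈ E, (-1 : ℂ) ^ (∏ i ∈ e, (if v i then 1 else 0 : ℕ))) := by
  refine ⟨1, fun n E _ => ⟨∑ e ∈ E, (e.card + 1), ?_, repr_all n E⟩⟩
  exact Finset.sum_le_sum fun e _ => by omega
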